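/- Let F be a field with a valuation v, and let K ⊆ K' and K ⊆ L be subfields of F. Assume that the extension L/K is vs-defectless, that Γ(L) ∩ Γ(K') = Γ(K), and that the residue field k(L) is linearly disjoint from k(K') over k(K) inside the residue field of F. Let LK' denote the subfield of F generated by L ∪ K'. Then Γ(LK') = Γ(L) + Γ(K'), i.e., the value group of the compositum is the subgroup of Γ generated by Γ(L) and Γ(K'). -/

import Mathlib

open scoped Pointwise

/-- Linear independence of a finite family over a subset `E` of a commutative ring: no
nontrivial linear combination with coefficients in `E` vanishes. -/
def LinIndepOver {R : Type*} [CommRing R] (E : Set R) {n : ℕ} (b : Fin n → R) : Prop :=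
  ∀ c : Fin n → R, (∀ i, c i ∈ E) → (∑ i, c i * b i) = 0 → ∀ i, c i = 0

variable {F Γ₀ : Type*} [Field F] [LinearOrderedCommGroupWithZero Γ₀]

/-- A finite family `b` of elements of `F` is `E`-valuation independent:
`v(∑ cᵢ bᵢ) = minᵢ v(cᵢ bᵢ)` for all coefficients `cᵢ ∈ E`.  (In Mathlib's multiplicative
convention for valuations, the additive `min` becomes the multiplicative `sup`, and the additive
`∞` becomes `0`.) -/
def ValIndep (v : Valuation F Γ₀) (E : Set F) {n : ℕ} (b : Fin n → F) : Prop :=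
  letI : OrderBot Γ₀ := { bot := 0, bot_le := fun _ => zero_le' }
  ∀ c : Fin n → F, (∀ i, c i ∈ E) →
    v (∑ i, c i * b i) = Finset.univ.sup fun i => v (c i * b i)

/-- The `E`-linear span (inside `F`) of a subset `s ⊆ F`, for `E ⊆ F`. -/
def SpanOver (E s : Set F) : Set F :=
  {y | ∃ (n : ℕ) (c t : Fin n → F),
    (∀ i, c i ∈ E) ∧ (∀ i, t i ∈ s) ∧ y = ∑ i, c i * t i}

/-- The extension `L/E` is vs-defectless: every finite-dimensional `E`-vector subspace of `L`
admits an `E`-basis which is `E`-valuation independent. -/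
def VsDefectless (v : Valuation F Γ₀) (E L : Set F) : Prop :=
  ∀ (n : ℕ) (x : Fin n → F), (∀ i, x i ∈ L) →
    ∃ (m : ℕ) (b : Fin m → F),
      ValIndep v E b ∧ LinIndepOver E b ∧
        SpanOver E (Set.range b) = SpanOver E (Set.range x)

/-- The value group `Γ(E) = v(E∖{0})` of a subset `E ⊆ F`, as a subset of `Γ₀`. -/
def ValueGroupSet (v : Valuation F Γ₀) (E : Set F) : Set Γ₀ :=
  v '' (E \ {0})

/-- The residue field `k_F = O_F/m_F` of the valued field `(F, v)`. -/
abbrev ResField (v : Valuation F Γ₀) : Type _ :=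
  IsLocalRing.ResidueField v.valuationSubring

/-- The image `k(E) = res(O_E)` of a subset `E ⊆ F` in the residue field of `(F, v)`. -/
def ResidueSet (v : Valuation F Γ₀) (E : Set F) : Set (ResField v) :=
  {y | ∃ x : v.valuationSubring, (x : F) ∈ E ∧ IsLocalRing.residue _ x = y}

section Auxiliary

variable (v : Valuation F Γ₀)

private theorem isUnit_iff_val_one (x : v.valuationSubring) : IsUnit x ↔ v (x : F) = 1 := by
  constructor
  · rintro ⟨u, rfl⟩
    have h1 : ((u : v.valuationSubring) : F) *
        (((u⁻¹ : (v.valuationSubring)ˣ) : v.valuationSubring) : F) = 1 := by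
      exact_mod_cast congrArg (fun y : v.valuationSubring => (y : F)) u.mul_inv
    have ha : v ((u : v.valuationSubring) : F) ≤ 1 := (u : v.valuationSubring).2
    have hb : v (((u⁻¹ : (v.valuationSubring)ˣ) : v.valuationSubring) : F) ≤ 1 :=
      ((u⁻¹ : (v.valuationSubring)ˣ) : v.valuationSubring).2
    have hm : v ((u : v.valuationSubring) : F) *
        v (((u⁻¹ : (v.valuationSubring)ˣ) : v.valuationSubring) : F) = 1 := by
      rw [← v.map_mul, h1, v.map_one]
    refine le_antisymm ha ?_
    calc (1:Γ₀) = _ * _ := hm.symm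
    _ ≤ v ((u : v.valuationSubring) : F) * 1 := mul_le_mul_right hb _
    _ = _ := mul_one _
  · intro h
    have hx0 : (x : F) ≠ 0 := v.ne_zero_iff.mp (by rw [h]; exact one_ne_zero)
    have hy : ((x : F)⁻¹) ∈ v.valuationSubring := by
      rw [Valuation.mem_valuationSubring_iff, map_inv₀, h, inv_one]
    exact IsUnit.of_mul_eq_one (a := x) ⟨_, hy⟩ (Subtype.ext (mul_inv_cancel₀ hx0))

private theorem residue_zero_iff (x : v.valuationSubring) :
    IsLocalRing.residue v.valuationSubring x = 0 ↔ v (x : F) < 1 := by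
  have h1 : IsLocalRing.residue v.valuationSubring x = 0 ↔ x ∈ IsLocalRing.maximalIdeal _ :=
    Ideal.Quotient.eq_zero_iff_mem
  rw [h1, IsLocalRing.mem_maximalIdeal, mem_nonunits_iff, isUnit_iff_val_one]
  exact ⟨fun h => lt_of_le_of_ne x.2 h, fun h => ne_of_lt h⟩

private theorem val_one_of_residue_ne_zero {x : v.valuationSubring}
    (h : IsLocalRing.residue v.valuationSubring x ≠ 0) : v (x : F) = 1 :=
  le_antisymm x.2 (not_lt.mp fun hlt => h ((residue_zero_iff v x).mpr hlt))

/-- membership in the value group set. -/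
private theorem mem_vgs_of {E : Set F} {x : F} (hx : x ∈ E) (h0 : x ≠ 0) :
    v x ∈ ValueGroupSet v E :=
  ⟨x, ⟨hx, h0⟩, rfl⟩

private theorem ne_zero_of_mem_vgs {E : Set F} {γ : Γ₀} (h : γ ∈ ValueGroupSet v E) : γ ≠ 0 := by
  obtain ⟨x, ⟨-, hx0⟩, rfl⟩ := h
  exact v.ne_zero_iff.mpr hx0

/-- self-membership in the span. -/
private theorem mem_spanOver_self {E s : Set F} (h1 : (1:F) ∈ E) {x : F} (hx : x ∈ s) :
    x ∈ SpanOver E s :=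
  ⟨1, fun _ => 1, fun _ => x, fun _ => h1, fun _ => hx, by simp⟩

private theorem spanOver_subset {E s : Set F} (L : Subfield F) (hE : E ⊆ L) (hs : s ⊆ L) :
    SpanOver E s ⊆ (L : Set F) := by
  rintro y ⟨n, c, t, hc, ht, rfl⟩
  exact Subfield.sum_mem L fun i _ => Subfield.mul_mem L (hE (hc i)) (hs (ht i))

/-- Rewrite a member of the span of the range of a finite family as an honest linear
combination of that family. -/
private theorem spanOver_range_rep {m : ℕ} {b : Fin m → F} (K : Subfield F) {y : F}
    (hy : y ∈ SpanOver (K : Set F) (Set.range b)) :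
    ∃ e : Fin m → F, (∀ k, e k ∈ K) ∧ y = ∑ k, e k * b k := by
  classical
  obtain ⟨n, c, t, hc, ht, rfl⟩ := hy
  choose g hg using fun i => ht i
  refine ⟨fun k => ∑ j ∈ Finset.univ.filter (fun j => g j = k), c j,
    fun k => Subfield.sum_mem K fun j _ => hc j, ?_⟩
  calc ∑ j, c j * t j = ∑ j, c j * b (g j) := by
        refine Finset.sum_congr rfl fun j _ => by rw [hg j]
  _ = ∑ k, ∑ j ∈ Finset.univ.filter (fun j => g j = k), (c j * b (g j)) :=
        (Finset.sum_fiberwise Finset.univ g (fun j => c j * b (g j))).symm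
  _ = ∑ k, (∑ j ∈ Finset.univ.filter (fun j => g j = k), c j) * b k := by
        refine Finset.sum_congr rfl fun k _ => ?_
        rw [Finset.sum_mul]
        refine Finset.sum_congr rfl fun j hj => ?_
        rw [(Finset.mem_filter.mp hj).2]

private theorem zero_mem_spanOver {E s : Set F} : (0:F) ∈ SpanOver E s :=
  ⟨0, Fin.elim0, Fin.elim0, fun i => i.elim0, fun i => i.elim0, by simp⟩

private theorem add_mem_spanOver {E s : Set F} {x y : F}
    (hx : x ∈ SpanOver E s) (hy : y ∈ SpanOver E s) : x + y ∈ SpanOver E s := by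
  obtain ⟨n₁, c₁, t₁, hc₁, ht₁, rfl⟩ := hx
  obtain ⟨n₂, c₂, t₂, hc₂, ht₂, rfl⟩ := hy
  refine ⟨n₁ + n₂, Fin.append c₁ c₂, Fin.append t₁ t₂, ?_, ?_, ?_⟩
  · intro i
    refine Fin.addCases (fun j => ?_) (fun j => ?_) i <;>
      simp [Fin.append_left, Fin.append_right, hc₁, hc₂]
  · intro i
    refine Fin.addCases (fun j => ?_) (fun j => ?_) i <;>
      simp [Fin.append_left, Fin.append_right, ht₁, ht₂]
  · rw [Fin.sum_univ_add]
    simp [Fin.append_left, Fin.append_right]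

private theorem neg_mem_spanOver {E s : Set F} (hE : ∀ a ∈ E, -a ∈ E) {x : F}
    (hx : x ∈ SpanOver E s) : -x ∈ SpanOver E s := by
  obtain ⟨n, c, t, hc, ht, rfl⟩ := hx
  exact ⟨n, fun i => -(c i), t, fun i => hE _ (hc i), ht, by simp [neg_mul, Finset.sum_neg_distrib]⟩

private theorem mul_mem_spanOver {E s : Set F}
    (hEm : ∀ a ∈ E, ∀ b ∈ E, a * b ∈ E) (hsm : ∀ a ∈ s, ∀ b ∈ s, a * b ∈ s) {x y : F}
    (hx : x ∈ SpanOver E s) (hy : y ∈ SpanOver E s) : x * y ∈ SpanOver E s := by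
  obtain ⟨n₁, c₁, t₁, hc₁, ht₁, rfl⟩ := hx
  obtain ⟨n₂, c₂, t₂, hc₂, ht₂, rfl⟩ := hy
  refine ⟨n₁ * n₂,
    fun k => c₁ (finProdFinEquiv.symm k).1 * c₂ (finProdFinEquiv.symm k).2,
    fun k => t₁ (finProdFinEquiv.symm k).1 * t₂ (finProdFinEquiv.symm k).2,
    fun k => hEm _ (hc₁ _) _ (hc₂ _), fun k => hsm _ (ht₁ _) _ (ht₂ _), ?_⟩
  rw [Finset.sum_mul_sum]
  rw [← Equiv.sum_comp finProdFinEquiv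
    (fun k => (c₁ (finProdFinEquiv.symm k).1 * c₂ (finProdFinEquiv.symm k).2) *
      (t₁ (finProdFinEquiv.symm k).1 * t₂ (finProdFinEquiv.symm k).2))]
  rw [Fintype.sum_prod_type]
  simp only [Equiv.symm_apply_apply]
  exact Finset.sum_congr rfl fun i _ => Finset.sum_congr rfl fun j _ => by ring


private theorem valIndep_extend
    (K K' L : Subfield F) (hKK' : K ≤ K') (hKL : K ≤ L)
    (hΓ : ValueGroupSet v (L : Set F) ∩ ValueGroupSet v (K' : Set F)
        = ValueGroupSet v (K : Set F))
    (hres : ∀ (n : ℕ) (x : Fin n → ResField v),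
        (∀ i, x i ∈ ResidueSet v (L : Set F)) →
        LinIndepOver (ResidueSet v (K : Set F)) x →
        LinIndepOver (ResidueSet v (K' : Set F)) x)
    {m : ℕ} {b : Fin m → F} (hbL : ∀ i, b i ∈ L)
    (hvi : ValIndep v (K : Set F) b) (hli : LinIndepOver (K : Set F) b) :
    ValIndep v (K' : Set F) b := by
  classical
  letI : OrderBot Γ₀ := { bot := 0, bot_le := fun _ => zero_le' }
  intro c hc
  set γ := Finset.univ.sup (fun i => v (c i * b i)) with hγdef
  have hle : v (∑ i, c i * b i) ≤ γ := by
    rw [hγdef]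
    exact v.map_sum_le (fun i _ => Finset.le_sup (f := fun i => v (c i * b i)) (Finset.mem_univ i))
  rcases eq_or_lt_of_le hle with h | hlt
  · exact h
  exfalso
  have hγ0 : γ ≠ 0 := by
    intro h
    rw [h] at hlt
    exact absurd hlt (not_lt.mpr zero_le')
  -- every `b i` is nonzero
  have hb0 : ∀ i, b i ≠ 0 := by
    intro i hbi
    have hsum : (∑ j, (if j = i then (1:F) else 0) * b j) = 0 := by
      simp [ite_mul, hbi]
    have := hli (fun j => if j = i then (1:F) else 0)
      (fun j => by by_cases h : j = i <;> simp [h, Subfield.one_mem, Subfield.zero_mem]) hsum i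
    simp at this
  have hvb0 : ∀ i, v (b i) ≠ 0 := fun i => v.ne_zero_iff.mpr (hb0 i)
  -- the sup is attained
  have hne : (Finset.univ : Finset (Fin m)).Nonempty := by
    rcases (Finset.univ : Finset (Fin m)).eq_empty_or_nonempty with h | h
    · exfalso; apply hγ0; rw [hγdef, h, Finset.sup_empty]; rfl
    · exact h
  obtain ⟨i₀, -, hi₀⟩ :=
    Finset.exists_mem_eq_sup (Finset.univ : Finset (Fin m)) hne (fun i => v (c i * b i))
  have hi₀' : γ = v (c i₀ * b i₀) := by rw [hγdef]; exact hi₀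
  have hci₀ : v (c i₀) ≠ 0 := by
    intro h
    apply hγ0
    rw [hi₀', v.map_mul, h, zero_mul]
  have hc0 : c i₀ ≠ 0 := v.ne_zero_iff.mp hci₀
  -- the set of indices where the sup is attained
  set S : Finset (Fin m) := Finset.univ.filter (fun i => v (c i * b i) = γ) with hSdef
  have hi₀S : i₀ ∈ S := Finset.mem_filter.mpr ⟨Finset.mem_univ _, hi₀'.symm⟩
  have hvS : ∀ i ∈ S, v (c i * b i) = γ := fun i hi => (Finset.mem_filter.mp hi).2
  have hvcS : ∀ i ∈ S, v (c i) ≠ 0 := by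
    intro i hi h
    apply hγ0; rw [← hvS i hi, v.map_mul, h, zero_mul]
  have hcS0 : ∀ i ∈ S, c i ≠ 0 := fun i hi => v.ne_zero_iff.mp (hvcS i hi)
  -- choose `d i ∈ K` with `v (d i) = v (b i) / v (b i₀)` for `i ∈ S`
  have hd : ∀ i ∈ S, ∃ d : F, d ∈ K ∧ d ≠ 0 ∧ v d = v (b i) / v (b i₀) := by
    intro i hi
    have h1 : v (b i) / v (b i₀) ∈ ValueGroupSet v (L : Set F) := by
      rw [← map_div₀]
      exact mem_vgs_of v (Subfield.div_mem L (hbL i) (hbL i₀)) (div_ne_zero (hb0 i) (hb0 i₀))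
    have h2 : v (b i) / v (b i₀) = v (c i₀) / v (c i) := by
      rw [div_eq_div_iff (hvb0 i₀) (hvcS i hi)]
      have h5 := (hvS i hi).trans hi₀'
      rw [v.map_mul, v.map_mul] at h5
      rw [mul_comm (v (b i))]
      exact h5
    have h3 : v (b i) / v (b i₀) ∈ ValueGroupSet v (K' : Set F) := by
      rw [h2, ← map_div₀]
      exact mem_vgs_of v (Subfield.div_mem K' (hc i₀) (hc i)) (div_ne_zero hc0 (hcS0 i hi))
    have h4 : v (b i) / v (b i₀) ∈ ValueGroupSet v (K : Set F) := by
      rw [← hΓ]; exact ⟨h1, h3⟩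
    obtain ⟨d, ⟨hdK, hd0⟩, hdv⟩ := h4
    exact ⟨d, hdK, fun h => hd0 (by simp [h]), hdv⟩
  let d : Fin m → F := fun i => if h : i ∈ S then (hd i h).choose else 1
  have hdK : ∀ i ∈ S, d i ∈ K := by
    intro i hi; simp only [d, dif_pos hi]; exact (hd i hi).choose_spec.1
  have hd0 : ∀ i ∈ S, d i ≠ 0 := by
    intro i hi; simp only [d, dif_pos hi]; exact (hd i hi).choose_spec.2.1
  have hdv : ∀ i ∈ S, v (d i) = v (b i) / v (b i₀) := by
    intro i hi; simp only [d, dif_pos hi]; exact (hd i hi).choose_spec.2.2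
  -- the normalized families
  let u : Fin m → F := fun i => b i / (d i * b i₀)
  let w : Fin m → F := fun i => c i * d i / c i₀
  have hu1 : ∀ i ∈ S, v (u i) = 1 := by
    intro i hi
    show v (b i / (d i * b i₀)) = 1
    rw [map_div₀, v.map_mul, hdv i hi, div_mul_cancel₀ _ (hvb0 i₀), div_self (hvb0 i)]
  have hw1 : ∀ i ∈ S, v (w i) = 1 := by
    intro i hi
    show v (c i * d i / c i₀) = 1
    rw [map_div₀, v.map_mul, hdv i hi]
    rw [div_eq_one_iff_eq hci₀]
    have h := (hvS i hi).trans hi₀'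
    rw [v.map_mul, v.map_mul] at h
    rw [← mul_div_assoc, div_eq_iff (hvb0 i₀)]
    exact h
  have huL : ∀ i ∈ S, u i ∈ L := fun i hi =>
    Subfield.div_mem L (hbL i) (Subfield.mul_mem L (hKL (hdK i hi)) (hbL i₀))
  -- key identity
  have hkey : ∀ i ∈ S, c i * b i = (c i₀ * b i₀) * (w i * u i) := by
    intro i hi
    show c i * b i = (c i₀ * b i₀) * ((c i * d i / c i₀) * (b i / (d i * b i₀)))
    have h1 := hd0 i hi
    have h2 := hb0 i₀
    field_simp
  -- the S-part of the sum has valuation < γ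
  have hSsum : v (∑ i ∈ S, c i * b i) < γ := by
    have h2 : v (∑ i ∈ Sᶜ, c i * b i) < γ := by
      refine v.map_sum_lt hγ0 (fun i hi => ?_)
      refine lt_of_le_of_ne ?_ ?_
      · rw [hγdef]
        exact Finset.le_sup (f := fun i => v (c i * b i)) (Finset.mem_univ i)
      · intro hh
        exact Finset.mem_compl.mp hi (Finset.mem_filter.mpr ⟨Finset.mem_univ i, hh⟩)
    have h3 : ∑ i ∈ S, c i * b i = (∑ i, c i * b i) - ∑ i ∈ Sᶜ, c i * b i := by
      rw [eq_sub_iff_add_eq, Finset.sum_add_sum_compl]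
    rw [h3]
    exact lt_of_le_of_lt (v.map_sub _ _) (max_lt hlt h2)
  have hfac : ∑ i ∈ S, c i * b i = (c i₀ * b i₀) * ∑ i ∈ S, w i * u i := by
    rw [Finset.mul_sum]
    exact Finset.sum_congr rfl hkey
  have hwu_lt : v (∑ i ∈ S, w i * u i) < 1 := by
    have h8 := hSsum
    rw [hfac, v.map_mul, ← hi₀'] at h8
    -- γ * X < γ  ⇒  X < 1
    have h9 : γ * v (∑ i ∈ S, w i * u i) < γ * 1 := by rwa [mul_one]
    exact lt_of_mul_lt_mul_left' h9
  -- pass to residues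
  have huO : ∀ i ∈ S, u i ∈ v.valuationSubring := fun i hi => by
    rw [Valuation.mem_valuationSubring_iff, hu1 i hi]
  have hwO : ∀ i ∈ S, w i ∈ v.valuationSubring := fun i hi => by
    rw [Valuation.mem_valuationSubring_iff, hw1 i hi]
  set n' := S.card with hn'def
  let σ : Fin n' ≃o {x // x ∈ S} := S.orderIsoOfFin rfl
  let ub : Fin n' → ResField v := fun k =>
    IsLocalRing.residue _ ⟨u ((σ k : Fin m)), huO _ (σ k).2⟩
  let wb : Fin n' → ResField v := fun k =>
    IsLocalRing.residue _ ⟨w ((σ k : Fin m)), hwO _ (σ k).2⟩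
  have hubL : ∀ k, ub k ∈ ResidueSet v (L : Set F) := fun k =>
    ⟨_, huL _ (σ k).2, rfl⟩
  have hwbK' : ∀ k, wb k ∈ ResidueSet v (K' : Set F) := fun k =>
    ⟨_, Subfield.div_mem K' (Subfield.mul_mem K' (hc _) (hKK' (hdK _ (σ k).2))) (hc i₀), rfl⟩
  -- not linearly independent over k(K')
  have hnotK' : ¬ LinIndepOver (ResidueSet v (K' : Set F)) ub := by
    intro hLI
    have hZ : (∑ k, wb k * ub k) = 0 := by
      have hzz : ∀ k : Fin n', wb k * ub k =
          IsLocalRing.residue _ (⟨w ((σ k : Fin m)), hwO _ (σ k).2⟩ *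
            ⟨u ((σ k : Fin m)), huO _ (σ k).2⟩ : v.valuationSubring) := fun k =>
        (map_mul _ _ _).symm
      rw [Finset.sum_congr rfl (fun k _ => hzz k), ← map_sum]
      set Z : v.valuationSubring := ∑ k : Fin n',
        (⟨w ((σ k : Fin m)), hwO _ (σ k).2⟩ * ⟨u ((σ k : Fin m)), huO _ (σ k).2⟩ :
          v.valuationSubring) with hZdef
      have hZcoe : (Z : F) = ∑ i ∈ S, w i * u i := by
        have h1 : (Z : F) = ∑ k : Fin n', w ((σ k : Fin m)) * u ((σ k : Fin m)) := by
          rw [hZdef]; push_cast; rfl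
        rw [h1, ← Finset.sum_attach S (fun i => w i * u i), ← Finset.univ_eq_attach]
        exact Equiv.sum_comp σ.toEquiv (fun x : {x // x ∈ S} => w (x : Fin m) * u (x : Fin m))
      refine (residue_zero_iff v Z).mpr ?_
      rw [hZcoe]
      exact hwu_lt
    have hall := hLI wb hwbK' hZ
    have h10 := hall (σ.symm ⟨i₀, hi₀S⟩)
    have h11 := (residue_zero_iff v _).mp h10
    rw [hw1 _ (σ (σ.symm ⟨i₀, hi₀S⟩)).2] at h11
    exact absurd h11 (lt_irrefl 1)
  have hnotK : ¬ LinIndepOver (ResidueSet v (K : Set F)) ub :=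
    fun h => hnotK' (hres n' ub hubL h)
  rw [LinIndepOver] at hnotK
  push_neg at hnotK
  obtain ⟨eb, hebK, hebsum, k₁, hk₁⟩ := hnotK
  choose eh hehK hehres using fun k => hebK k
  -- the lifted relation has valuation < 1
  set W : v.valuationSubring :=
    ∑ k : Fin n', eh k * ⟨u ((σ k : Fin m)), huO _ (σ k).2⟩ with hWdef
  have hWres : IsLocalRing.residue _ W = 0 := by
    rw [hWdef, map_sum, ← hebsum]
    exact Finset.sum_congr rfl fun k _ => by rw [map_mul, hehres]
  have hWv : v ((W : F)) < 1 := (residue_zero_iff v W).mp hWres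
  have hWcoe : (W : F) = ∑ k : Fin n', (eh k : F) * u ((σ k : Fin m)) := by
    rw [hWdef]; push_cast; rfl
  -- the contradicting coefficient family
  let a : Fin m → F := fun i => if h : i ∈ S then (eh (σ.symm ⟨i, h⟩) : F) / d i else 0
  have haK : ∀ i, a i ∈ (K : Set F) := by
    intro i
    by_cases h : i ∈ S
    · simp only [a, dif_pos h]
      exact Subfield.div_mem K (hehK _) (hdK i h)
    · simp only [a, dif_neg h]
      exact Subfield.zero_mem K
  have hsum_a : ∑ i, a i * b i = b i₀ * (W : F) := by
    rw [← Finset.sum_subset (Finset.subset_univ S)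
      (fun i _ hi => by simp only [a, dif_neg hi, zero_mul])]
    rw [← Finset.sum_attach S (fun i => a i * b i)]
    have hterm : ∀ x : {x // x ∈ S},
        a (x : Fin m) * b (x : Fin m) = b i₀ * ((eh (σ.symm x) : F) * u (x : Fin m)) := by
      intro x
      have h1 : a (x : Fin m) = (eh (σ.symm x) : F) / d (x : Fin m) := by
        simp only [a, dif_pos x.2, Subtype.coe_eta]
      have h2 : b (x : Fin m) = u (x : Fin m) * (d (x : Fin m) * b i₀) := by
        show b (x : Fin m) = b (x : Fin m) / (d (x : Fin m) * b i₀) * (d (x : Fin m) * b i₀)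
        rw [div_mul_cancel₀]
        exact mul_ne_zero (hd0 _ x.2) (hb0 i₀)
      rw [h1, h2]
      have h3 := hd0 _ x.2
      field_simp
    rw [Finset.sum_congr rfl (fun x _ => hterm x), ← Finset.mul_sum, hWcoe]
    congr 1
    rw [← Finset.univ_eq_attach,
      ← Equiv.sum_comp σ.toEquiv (fun x : {x // x ∈ S} => (eh (σ.symm x) : F) * u (x : Fin m))]
    exact Finset.sum_congr rfl fun k _ => by simp
  -- valuation bounds give the contradiction
  have hfin1 : v (∑ i, a i * b i) < v (b i₀) := by
    rw [hsum_a, v.map_mul]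
    nth_rewrite 2 [← mul_one (v (b i₀))]
    exact mul_lt_mul_of_pos_left hWv (zero_lt_iff.mpr (hvb0 i₀))
  have hfin2 : v (b i₀) ≤ v (∑ i, a i * b i) := by
    rw [hvi a haK]
    have hi₁S := (σ k₁).2
    have hval : v (a ((σ k₁ : Fin m)) * b ((σ k₁ : Fin m))) = v (b i₀) := by
      have h1 : a ((σ k₁ : Fin m)) = (eh k₁ : F) / d ((σ k₁ : Fin m)) := by
        simp only [a, dif_pos hi₁S, Subtype.coe_eta, OrderIso.symm_apply_apply]
      have h2 : v ((eh k₁ : F)) = 1 :=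
        val_one_of_residue_ne_zero v (by rw [hehres]; exact hk₁)
      rw [v.map_mul, h1, map_div₀, h2, hdv _ hi₁S, one_div, inv_div,
        div_mul_cancel₀ _ (hvb0 _)]
    rw [← hval]
    exact Finset.le_sup (f := fun i => v (a i * b i)) (Finset.mem_univ _)
  exact absurd hfin1 (not_lt.mpr hfin2)


/-- The `K'`-span of `L` is a subring of `F`. -/
private def spanSubring (K' L : Subfield F) : Subring F where
  carrier := SpanOver (K' : Set F) (L : Set F)
  zero_mem' := zero_mem_spanOver
  one_mem' := mem_spanOver_self (Subfield.one_mem K') (Subfield.one_mem L)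
  add_mem' := add_mem_spanOver
  neg_mem' := neg_mem_spanOver (fun a ha => Subfield.neg_mem K' ha)
  mul_mem' := mul_mem_spanOver
    (fun a ha b hb => Subfield.mul_mem K' ha hb)
    (fun a ha b hb => Subfield.mul_mem L ha hb)

private theorem val_mem_of_spanOver (v : Valuation F Γ₀)
    (K K' L : Subfield F) (hKK' : K ≤ K') (hKL : K ≤ L)
    (hdef : VsDefectless v (K : Set F) (L : Set F))
    (hΓ : ValueGroupSet v (L : Set F) ∩ ValueGroupSet v (K' : Set F)
        = ValueGroupSet v (K : Set F))
    (hres : ∀ (n : ℕ) (x : Fin n → ResField v),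
        (∀ i, x i ∈ ResidueSet v (L : Set F)) →
        LinIndepOver (ResidueSet v (K : Set F)) x →
        LinIndepOver (ResidueSet v (K' : Set F)) x)
    {x : F} (hx : x ∈ SpanOver (K' : Set F) (L : Set F)) (hx0 : x ≠ 0) :
    v x ∈ ValueGroupSet v (L : Set F) * ValueGroupSet v (K' : Set F) := by
  classical
  letI : OrderBot Γ₀ := { bot := 0, bot_le := fun _ => zero_le' }
  obtain ⟨n, c, t, hcK', htL, rfl⟩ := hx
  obtain ⟨m, b, hviK, hliK, hspan⟩ := hdef n t htL
  have hbL : ∀ k, b k ∈ L := by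
    intro k
    have hbk : b k ∈ SpanOver (K : Set F) (Set.range b) :=
      mem_spanOver_self (Subfield.one_mem K) ⟨k, rfl⟩
    rw [hspan] at hbk
    refine spanOver_subset L (fun a ha => hKL ha) (fun a ha => ?_) hbk
    obtain ⟨i, hi⟩ := ha
    exact hi ▸ htL i
  have hti : ∀ i, ∃ e : Fin m → F, (∀ k, e k ∈ K) ∧ t i = ∑ k, e k * b k := by
    intro i
    have h1 : t i ∈ SpanOver (K : Set F) (Set.range t) :=
      mem_spanOver_self (Subfield.one_mem K) ⟨i, rfl⟩
    rw [← hspan] at h1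
    exact spanOver_range_rep K h1
  choose e heK het using hti
  have hrw : ∑ i, c i * t i = ∑ k, (∑ i, c i * e i k) * b k := by
    calc ∑ i, c i * t i = ∑ i, ∑ k, c i * (e i k * b k) := by
          refine Finset.sum_congr rfl fun i _ => ?_
          rw [het i, Finset.mul_sum]
    _ = ∑ k, ∑ i, c i * (e i k * b k) := Finset.sum_comm
    _ = ∑ k, (∑ i, c i * e i k) * b k := by
          refine Finset.sum_congr rfl fun k _ => ?_
          rw [Finset.sum_mul]
          exact Finset.sum_congr rfl fun i _ => by ring
  set dd : Fin m → F := fun k => ∑ i, c i * e i k with hdd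
  have hddK' : ∀ k, dd k ∈ (K' : Set F) := fun k =>
    Subfield.sum_mem K' fun i _ => Subfield.mul_mem K' (hcK' i) (hKK' (heK i k))
  have hA : ValIndep v (K' : Set F) b :=
    valIndep_extend v K K' L hKK' hKL hΓ hres hbL hviK hliK
  have hval : v (∑ i, c i * t i) = Finset.univ.sup fun k => v (dd k * b k) := by
    rw [hrw]
    exact hA dd hddK'
  have hvx0 : v (∑ i, c i * t i) ≠ 0 := v.ne_zero_iff.mpr hx0
  have hne : (Finset.univ : Finset (Fin m)).Nonempty := by
    rcases (Finset.univ : Finset (Fin m)).eq_empty_or_nonempty with h | h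
    · exfalso
      apply hvx0
      rw [hval, h, Finset.sup_empty]
      rfl
    · exact h
  obtain ⟨k, -, hk⟩ :=
    Finset.exists_mem_eq_sup (Finset.univ : Finset (Fin m)) hne (fun k => v (dd k * b k))
  have hvk : v (∑ i, c i * t i) = v (b k) * v (dd k) := by
    rw [hval, hk, v.map_mul, mul_comm]
  have hkne : v (dd k * b k) ≠ 0 := by rw [← hk, ← hval]; exact hvx0
  rw [v.map_mul] at hkne
  have hdd0 : dd k ≠ 0 := v.ne_zero_iff.mp (left_ne_zero_of_mul hkne)
  have hbk0 : b k ≠ 0 := v.ne_zero_iff.mp (right_ne_zero_of_mul hkne)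
  rw [hvk]
  exact Set.mul_mem_mul (mem_vgs_of v (hbL k) hbk0) (mem_vgs_of v (hddK' k) hdd0)

end Auxiliary

/-- Under the hypotheses of valuative disjointness, the value group of the
compositum `LK'` is generated by the value groups: `Γ(LK') = Γ(L) + Γ(K')` (written
multiplicatively here, `Γ(LK') = Γ(L) * Γ(K')`, following Mathlib's multiplicative convention
for valuations). -/
theorem valueGroup_of_compositum
    (F Γ₀ : Type*) [Field F] [LinearOrderedCommGroupWithZero Γ₀]
    (v : Valuation F Γ₀)
    (K K' L : Subfield F) (hKK' : K ≤ K') (hKL : K ≤ L)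
    (hdef : VsDefectless v (K : Set F) (L : Set F))
    (hΓ : ValueGroupSet v (L : Set F) ∩ ValueGroupSet v (K' : Set F)
        = ValueGroupSet v (K : Set F))
    (hres : ∀ (n : ℕ) (x : Fin n → ResField v),
        (∀ i, x i ∈ ResidueSet v (L : Set F)) →
        LinIndepOver (ResidueSet v (K : Set F)) x →
        LinIndepOver (ResidueSet v (K' : Set F)) x) :
    ValueGroupSet v ((L ⊔ K' : Subfield F) : Set F)
      = ValueGroupSet v (L : Set F) * ValueGroupSet v (K' : Set F) := by
  apply Set.eq_of_subset_of_subset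
  · rintro γ ⟨x, ⟨hx, hx0'⟩, rfl⟩
    have hx0 : x ≠ 0 := fun h => hx0' (by simp [h])
    have hcl : (L ⊔ K' : Subfield F) = Subfield.closure ((L : Set F) ∪ (K' : Set F)) := by
      rw [Subfield.closure_union, Subfield.closure_eq, Subfield.closure_eq]
    rw [SetLike.mem_coe, hcl, Subfield.mem_closure_iff] at hx
    obtain ⟨y, hy, z, hz, hyz⟩ := hx
    -- the subring closure lies in the `K'`-span of `L`
    have hsub : Subring.closure ((L : Set F) ∪ (K' : Set F)) ≤ spanSubring K' L := by
      apply Subring.closure_le.mpr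
      rintro a (ha | ha)
      · exact ⟨1, fun _ => 1, fun _ => a, fun _ => Subfield.one_mem K', fun _ => ha, by simp⟩
      · exact ⟨1, fun _ => a, fun _ => 1, fun _ => ha, fun _ => Subfield.one_mem L, by simp⟩
    have hz0 : z ≠ 0 := by
      intro h
      rw [h, div_zero] at hyz
      exact hx0 hyz.symm
    have hy0 : y ≠ 0 := by
      intro h
      rw [h, zero_div] at hyz
      exact hx0 hyz.symm
    have hyP : v y ∈ ValueGroupSet v (L : Set F) * ValueGroupSet v (K' : Set F) :=
      val_mem_of_spanOver v K K' L hKK' hKL hdef hΓ hres (hsub hy) hy0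
    have hzP : v z ∈ ValueGroupSet v (L : Set F) * ValueGroupSet v (K' : Set F) :=
      val_mem_of_spanOver v K K' L hKK' hKL hdef hΓ hres (hsub hz) hz0
    obtain ⟨α₁, ⟨a₁, ⟨ha₁L, ha₁0⟩, rfl⟩, β₁, ⟨b₁, ⟨hb₁K, hb₁0⟩, rfl⟩, hy'⟩ := hyP
    obtain ⟨α₂, ⟨a₂, ⟨ha₂L, ha₂0⟩, rfl⟩, β₂, ⟨b₂, ⟨hb₂K, hb₂0⟩, rfl⟩, hz'⟩ := hzP
    have ha₁0' : a₁ ≠ 0 := fun h => ha₁0 (by simp [h])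
    have ha₂0' : a₂ ≠ 0 := fun h => ha₂0 (by simp [h])
    have hb₁0' : b₁ ≠ 0 := fun h => hb₁0 (by simp [h])
    have hb₂0' : b₂ ≠ 0 := fun h => hb₂0 (by simp [h])
    have hvx : v x = (v a₁ / v a₂) * (v b₁ / v b₂) := by
      rw [← hyz, map_div₀, ← hy', ← hz', div_mul_div_comm]
    rw [hvx]
    exact Set.mul_mem_mul
      ⟨a₁ / a₂, ⟨Subfield.div_mem L ha₁L ha₂L, by simp [div_ne_zero ha₁0' ha₂0']⟩,
        map_div₀ v a₁ a₂⟩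
      ⟨b₁ / b₂, ⟨Subfield.div_mem K' hb₁K hb₂K, by simp [div_ne_zero hb₁0' hb₂0']⟩,
        map_div₀ v b₁ b₂⟩
  · rintro γ ⟨α, ⟨a, ⟨haL, ha0⟩, rfl⟩, β, ⟨b, ⟨hbK, hb0⟩, rfl⟩, rfl⟩
    have ha0' : a ≠ 0 := fun h => ha0 (by simp [h])
    have hb0' : b ≠ 0 := fun h => hb0 (by simp [h])
    refine ⟨a * b, ⟨?_, ?_⟩, v.map_mul a b⟩
    · exact Subfield.mul_mem _ (SetLike.le_def.mp le_sup_left haL)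
        (SetLike.le_def.mp le_sup_right hbK)
    · simp [mul_ne_zero ha0' hb0']
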